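/- If an isotropic function σ̂: PSym(3) → Sym(3) satisfies the strict Baker–Ericksen inequalities (for each B with eigenvalues λᵢ² and corresponding eigenvalues σᵢ of σ̂(B): λᵢ > λⱼ ⟹ σᵢ > σⱼ), then σ̂ is bi-coaxial, and hence semi-invertible. -/

import Mathlib

open Matrix

def IsEigenvector {n : ℕ} (A : Matrix (Fin n) (Fin n) ℝ) (v : Fin n → ℝ) : Prop :=
  v ≠ 0 ∧ ∃ μ : ℝ, A.mulVec v = μ • v

/-- `A` is coaxial to `B`: every eigenvector of `A` is an eigenvector of `B`. -/
def Coaxial {n : ℕ} (A B : Matrix (Fin n) (Fin n) ℝ) : Prop :=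
  ∀ v : Fin n → ℝ, IsEigenvector A v → IsEigenvector B v

/-- A matrix is orthogonal. -/
def IsOrthogonal {n : ℕ} (Q : Matrix (Fin n) (Fin n) ℝ) : Prop :=
  Q * Qᵀ = 1 ∧ Qᵀ * Q = 1

/-- PSym(3): positive-definite symmetric real 3×3 matrices. -/
def PSym3 : Set (Matrix (Fin 3) (Fin 3) ℝ) := {B | B.IsSymm ∧ B.PosDef}

/-- σ̂ is semi-invertible: B = ψ₀ I + ψ₁ σ̂(B) + ψ₂ σ̂(B)² with coefficients ψᵢ
depending only on the matrix invariants of B. -/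
def SemiInvertible (σ : Matrix (Fin 3) (Fin 3) ℝ → Matrix (Fin 3) (Fin 3) ℝ) : Prop :=
  ∃ ψ : Fin 3 → (Matrix (Fin 3) (Fin 3) ℝ → ℝ),
    (∀ k : Fin 3, ∀ B ∈ PSym3, ∀ Q : Matrix (Fin 3) (Fin 3) ℝ, IsOrthogonal Q →
      ψ k (Qᵀ * B * Q) = ψ k B) ∧
    ∀ B ∈ PSym3, B = ψ 0 B • 1 + ψ 1 B • σ B + ψ 2 B • (σ B) ^ 2

/-- The strict Baker–Ericksen inequalities: if v, w are common eigenvectors of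
B and σ̂(B), with eigenvalues λᵢ², λⱼ² of B and corresponding eigenvalues
σᵢ, σⱼ of σ̂(B), then λᵢ > λⱼ implies σᵢ > σⱼ. -/
def StrictBakerEricksen
    (σ : Matrix (Fin 3) (Fin 3) ℝ → Matrix (Fin 3) (Fin 3) ℝ) : Prop :=
  ∀ B ∈ PSym3, ∀ v w : Fin 3 → ℝ, v ≠ 0 → w ≠ 0 →
    ∀ lami lamj si sj : ℝ, 0 < lami → 0 < lamj →
      B.mulVec v = (lami ^ 2) • v → (σ B).mulVec v = si • v →
      B.mulVec w = (lamj ^ 2) • w → (σ B).mulVec w = sj • w →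
      lami > lamj → si > sj


/- ===== Auxiliary material ===== -/

section Aux

open scoped RealInnerProductSpace

variable {v : Fin 3 → ℝ} {B : Matrix (Fin 3) (Fin 3) ℝ}

private lemma P_transpose (v : Fin 3 → ℝ) : (vecMulVec v v)ᵀ = vecMulVec v v := by
  ext i j; simp [vecMulVec_apply, transpose_apply, mul_comm]

private lemma P_mulVec (v w : Fin 3 → ℝ) : (vecMulVec v v).mulVec w = (v ⬝ᵥ w) • v := by
  ext i
  simp only [vecMulVec_apply, mulVec, dotProduct, Pi.smul_apply, smul_eq_mul, Finset.sum_mul]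
  exact Finset.sum_congr rfl fun k _ => by ring

private lemma P_mul_P (v : Fin 3 → ℝ) :
    vecMulVec v v * vecMulVec v v = (v ⬝ᵥ v) • vecMulVec v v := by
  ext i j
  simp only [mul_apply, vecMulVec_apply, dotProduct, Matrix.smul_apply, smul_eq_mul, Finset.sum_mul]
  exact Finset.sum_congr rfl fun k _ => by ring

private lemma B_mul_P {μ : ℝ} (hv : B.mulVec v = μ • v) :
    B * vecMulVec v v = μ • vecMulVec v v := by
  ext i j
  have h := congrFun hv i
  simp only [mulVec, dotProduct, Pi.smul_apply, smul_eq_mul] at h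
  simp only [mul_apply, vecMulVec_apply, Matrix.smul_apply, smul_eq_mul]
  calc ∑ k, B i k * (v k * v j) = (∑ k, B i k * v k) * v j := by
        rw [Finset.sum_mul]; exact Finset.sum_congr rfl fun k _ => by ring
    _ = μ * (v i * v j) := by rw [h]; ring

private lemma P_mul_B {μ : ℝ} (hB : B.IsSymm) (hv : B.mulVec v = μ • v) :
    vecMulVec v v * B = μ • vecMulVec v v := by
  have h1 := congrArg Matrix.transpose (B_mul_P hv)
  rw [transpose_mul, P_transpose, hB.eq, transpose_smul, P_transpose] at h1
  exact h1

set_option linter.unnecessarySeqFocus false in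
/-- Part A: every eigenvector of `B` is an eigenvector of `σ B`. -/
private lemma coax_fwd (σ : Matrix (Fin 3) (Fin 3) ℝ → Matrix (Fin 3) (Fin 3) ℝ)
    (hσiso : ∀ B ∈ PSym3, ∀ Q : Matrix (Fin 3) (Fin 3) ℝ, IsOrthogonal Q →
      σ (Qᵀ * B * Q) = Qᵀ * σ B * Q)
    (hB : B ∈ PSym3) (hv : v ≠ 0) {μ : ℝ} (hμ : B.mulVec v = μ • v) :
    ∃ s : ℝ, (σ B).mulVec v = s • v := by
  set t : ℝ := v ⬝ᵥ v with ht
  have ht0 : t ≠ 0 := fun h => hv (by simpa using (dotProduct_self_eq_zero).mp h)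
  set c : ℝ := 2 / t with hc
  set P : Matrix (Fin 3) (Fin 3) ℝ := vecMulVec v v with hP
  set Q : Matrix (Fin 3) (Fin 3) ℝ := 1 - c • P with hQ
  have hPP : P * P = t • P := P_mul_P v
  have hBP : B * P = μ • P := B_mul_P hμ
  have hPB : P * B = μ • P := P_mul_B hB.1 hμ
  have hQsymm : Qᵀ = Q := by
    rw [hQ, transpose_sub, transpose_one, transpose_smul]; rw [hP, P_transpose]
  have hQQ : Q * Q = 1 := by
    rw [hQ]
    simp only [sub_mul, mul_sub, one_mul, mul_one, smul_mul_assoc, mul_smul_comm,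
      hPP, smul_smul]
    match_scalars <;> field_simp [hc] <;> try ring
    rw [hc]; field_simp; ring
  have hQorth : IsOrthogonal Q := by
    constructor <;> rw [hQsymm] <;> exact hQQ
  have hQBQ : Qᵀ * B * Q = B := by
    rw [hQsymm, hQ]
    simp only [sub_mul, mul_sub, one_mul, mul_one, smul_mul_assoc, mul_smul_comm,
      hPP, hPB, hBP, smul_smul]
    match_scalars <;> field_simp [hc] <;> try ring
    rw [hc]; field_simp; ring
  have hiso := hσiso B hB Q hQorth
  rw [hQBQ, hQsymm] at hiso
  have hcomm : Q * σ B = σ B * Q := by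
    calc Q * σ B = Q * (Q * σ B * Q) := by rw [← hiso]
      _ = σ B * Q := by rw [← mul_assoc, ← mul_assoc, hQQ, one_mul]
  set u := (σ B).mulVec v with hu
  have hQv : Q.mulVec v = -v := by
    rw [hQ, sub_mulVec, one_mulVec, smul_mulVec, P_mulVec, ← ht, smul_smul]
    have h2 : c * t = 2 := by rw [hc]; field_simp
    rw [h2]; module
  have hQu : Q.mulVec u = -u := by
    rw [hu, mulVec_mulVec, hcomm, ← mulVec_mulVec, hQv]
    simp [mulVec_neg]
  have hQu2 : Q.mulVec u = u - (c * (v ⬝ᵥ u)) • v := by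
    rw [hQ, sub_mulVec, one_mulVec, smul_mulVec, P_mulVec, smul_smul]
  have h2 : (2 : ℝ) • u = (c * (v ⬝ᵥ u)) • v :=
    by linear_combination (norm := module) (hQu2.symm.trans hQu)
  exact ⟨c * (v ⬝ᵥ u) / 2, by linear_combination (norm := module) ((2:ℝ)⁻¹) • h2⟩

private lemma eigen_data (hB : B ∈ PSym3) :
    ∃ (E : Fin 3 → (Fin 3 → ℝ)) (d : Fin 3 → ℝ),
      (∀ i, E i ≠ 0) ∧ (∀ i, B.mulVec (E i) = d i • E i) ∧ (∀ i, 0 < d i) ∧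
      (∀ w : Fin 3 → ℝ, ∑ i, (E i ⬝ᵥ w) • E i = w) := by
  have hher : B.IsHermitian := hB.2.1
  set b := hher.eigenvectorBasis with hb
  refine ⟨fun i => ⇑(b i), hher.eigenvalues, ?_, ?_, fun i => hB.2.eigenvalues_pos i, ?_⟩
  · intro i h
    exact b.orthonormal.ne_zero i (by ext j; exact congrFun h j)
  · exact fun i => hher.mulVec_eigenvectorBasis i
  · intro w
    have hrepr := b.sum_repr' (WithLp.toLp 2 w)
    have h2 : ∀ i, ⟪b i, (WithLp.toLp 2 w)⟫ = (⇑(b i) : Fin 3 → ℝ) ⬝ᵥ w := by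
      intro i; simp [PiLp.inner_apply, dotProduct, mul_comm]
    ext j
    calc (∑ i, ((⇑(b i) : Fin 3 → ℝ) ⬝ᵥ w) • ⇑(b i)) j
        = (∑ i, ⟪b i, (WithLp.toLp 2 w)⟫ • b i) j := by
          rw [Finset.sum_apply, WithLp.ofLp_sum, Finset.sum_apply]
          exact Finset.sum_congr rfl fun i _ => by rw [h2]; rfl
      _ = w j := by rw [hrepr]

private lemma matrix_eq_of_action {E : Fin 3 → (Fin 3 → ℝ)} {M N : Matrix (Fin 3) (Fin 3) ℝ}
    (hspan : ∀ w : Fin 3 → ℝ, ∑ i, (E i ⬝ᵥ w) • E i = w)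
    (h : ∀ i, M.mulVec (E i) = N.mulVec (E i)) : M = N := by
  have expand : ∀ (A : Matrix (Fin 3) (Fin 3) ℝ) (w : Fin 3 → ℝ),
      A.mulVec w = ∑ i, (E i ⬝ᵥ w) • A.mulVec (E i) := by
    intro A w
    conv_lhs => rw [← hspan w]
    rw [← A.mulVecLin_apply, map_sum]
    simp only [_root_.map_smul, Matrix.mulVecLin_apply]
  have key : ∀ w : Fin 3 → ℝ, M.mulVec w = N.mulVec w := by
    intro w; rw [expand M, expand N]; simp_rw [h]
  ext i j
  have := congrFun (key (Pi.single j 1)) i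
  simpa [Matrix.mulVec_single] using this

private lemma mulVec_expand {E : Fin 3 → (Fin 3 → ℝ)}
    (hspan : ∀ w : Fin 3 → ℝ, ∑ i, (E i ⬝ᵥ w) • E i = w)
    (A : Matrix (Fin 3) (Fin 3) ℝ) (w : Fin 3 → ℝ) :
    A.mulVec w = ∑ i, (E i ⬝ᵥ w) • A.mulVec (E i) := by
  conv_lhs => rw [← hspan w]
  rw [← A.mulVecLin_apply, map_sum]
  simp only [_root_.map_smul, Matrix.mulVecLin_apply]

private lemma interp2 {x y dx dy : ℝ} (h : x ≠ y) :
    ∃ a0 a1 : ℝ, dx = a0 + a1 * x ∧ dy = a0 + a1 * y := by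
  have hxy : x - y ≠ 0 := sub_ne_zero.mpr h
  refine ⟨dx - (dx - dy) / (x - y) * x, (dx - dy) / (x - y), by ring, ?_⟩
  field_simp
  ring

set_option maxHeartbeats 2000000 in
private lemma interp3 (s d : Fin 3 → ℝ) (h : ∀ i j, s i = s j → d i = d j) :
    ∃ a : Fin 3 → ℝ, ∀ i, d i = a 0 + a 1 * s i + a 2 * (s i) ^ 2 := by
  by_cases h01 : s 0 = s 1
  · by_cases h02 : s 0 = s 2
    · have e1 : d 1 = d 0 := h 1 0 h01.symm
      have e2 : d 2 = d 0 := h 2 0 h02.symm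
      exact ⟨![d 0, 0, 0], fun i => by fin_cases i <;> simp [e1, e2]⟩
    · obtain ⟨a0, a1, hx, hy⟩ := interp2 (dx := d 0) (dy := d 2) h02
      have e1 : d 1 = d 0 := h 1 0 h01.symm
      have f1 : s 1 = s 0 := h01.symm
      refine ⟨![a0, a1, 0], fun i => ?_⟩
      fin_cases i <;> simp [e1, f1] <;> linarith [hx, hy]
  · by_cases h02 : s 0 = s 2
    · obtain ⟨a0, a1, hx, hy⟩ := interp2 (dx := d 0) (dy := d 1) h01
      have e2 : d 2 = d 0 := h 2 0 h02.symm
      have f2 : s 2 = s 0 := h02.symm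
      refine ⟨![a0, a1, 0], fun i => ?_⟩
      fin_cases i <;> simp [e2, f2] <;> linarith [hx, hy]
    · by_cases h12 : s 1 = s 2
      · obtain ⟨a0, a1, hx, hy⟩ := interp2 (dx := d 0) (dy := d 1) h01
        have e2 : d 2 = d 1 := h 2 1 h12.symm
        have f2 : s 2 = s 1 := h12.symm
        refine ⟨![a0, a1, 0], fun i => ?_⟩
        fin_cases i <;> simp [e2, f2] <;> linarith [hx, hy]
      · have h0 : s 0 - s 1 ≠ 0 := sub_ne_zero.mpr h01
        have h1 : s 0 - s 2 ≠ 0 := sub_ne_zero.mpr h02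
        have h2 : s 1 - s 2 ≠ 0 := sub_ne_zero.mpr h12
        refine ⟨![d 0 * s 1 * s 2 / ((s 0 - s 1) * (s 0 - s 2))
                    + d 1 * s 0 * s 2 / ((s 1 - s 0) * (s 1 - s 2))
                    + d 2 * s 0 * s 1 / ((s 2 - s 0) * (s 2 - s 1)),
                 -(d 0 * (s 1 + s 2) / ((s 0 - s 1) * (s 0 - s 2))
                    + d 1 * (s 0 + s 2) / ((s 1 - s 0) * (s 1 - s 2))
                    + d 2 * (s 0 + s 1) / ((s 2 - s 0) * (s 2 - s 1))),
                 d 0 / ((s 0 - s 1) * (s 0 - s 2)) + d 1 / ((s 1 - s 0) * (s 1 - s 2))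
                    + d 2 / ((s 2 - s 0) * (s 2 - s 1))], fun i => ?_⟩
        have h0' : s 1 - s 0 ≠ 0 := by intro hh; apply h0; linarith [sub_eq_zero.mp hh]
        have h1' : s 2 - s 0 ≠ 0 := by intro hh; apply h1; linarith [sub_eq_zero.mp hh]
        have h2' : s 2 - s 1 ≠ 0 := by intro hh; apply h2; linarith [sub_eq_zero.mp hh]
        fin_cases i <;> simp <;> field_simp <;> ring

/-- full eigen package -/
private lemma eigen_package (σ : Matrix (Fin 3) (Fin 3) ℝ → Matrix (Fin 3) (Fin 3) ℝ)
    (hσiso : ∀ B ∈ PSym3, ∀ Q : Matrix (Fin 3) (Fin 3) ℝ, IsOrthogonal Q →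
      σ (Qᵀ * B * Q) = Qᵀ * σ B * Q)
    (hBE : StrictBakerEricksen σ) (hB : B ∈ PSym3) :
    ∃ (E : Fin 3 → (Fin 3 → ℝ)) (d s : Fin 3 → ℝ),
      (∀ i, E i ≠ 0) ∧ (∀ i, B.mulVec (E i) = d i • E i) ∧ (∀ i, 0 < d i) ∧
      (∀ i, (σ B).mulVec (E i) = s i • E i) ∧
      (∀ w : Fin 3 → ℝ, ∑ i, (E i ⬝ᵥ w) • E i = w) ∧
      (∀ i j, s i = s j → d i = d j) := by
  obtain ⟨E, d, hne, hBv, hdpos, hspan⟩ := eigen_data hB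
  choose s hs using fun i => coax_fwd σ hσiso hB (hne i) (hBv i)
  have hmono : ∀ i j, d j < d i → s j < s i := by
    intro i j hd
    refine hBE B hB (E i) (E j) (hne i) (hne j) (Real.sqrt (d i)) (Real.sqrt (d j))
      (s i) (s j) (Real.sqrt_pos.mpr (hdpos i)) (Real.sqrt_pos.mpr (hdpos j))
      ?_ (hs i) ?_ (hs j) ?_
    · rw [Real.sq_sqrt (hdpos i).le]; exact hBv i
    · rw [Real.sq_sqrt (hdpos j).le]; exact hBv j
    · exact Real.sqrt_lt_sqrt (hdpos j).le hd
  refine ⟨E, d, s, hne, hBv, hdpos, hs, hspan, ?_⟩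
  intro i j hss
  by_contra hdd
  rcases lt_or_gt_of_ne hdd with h | h
  · exact absurd hss (ne_of_lt (hmono j i h))
  · exact absurd hss (ne_of_gt (hmono i j h))

/-- Part B: coaxiality of σ B with B. -/
private lemma coax_bwd (σ : Matrix (Fin 3) (Fin 3) ℝ → Matrix (Fin 3) (Fin 3) ℝ)
    (hσsym : ∀ B ∈ PSym3, (σ B).IsSymm)
    (hσiso : ∀ B ∈ PSym3, ∀ Q : Matrix (Fin 3) (Fin 3) ℝ, IsOrthogonal Q →
      σ (Qᵀ * B * Q) = Qᵀ * σ B * Q)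
    (hBE : StrictBakerEricksen σ) (hB : B ∈ PSym3) : Coaxial (σ B) B := by
  rintro w ⟨hw, sw, hsw⟩
  refine ⟨hw, ?_⟩
  obtain ⟨E, d, s, hne, hBv, hdpos, hs, hspan, hsd⟩ := eigen_package σ hσiso hBE hB
  have hcoef : ∀ i, s i * (E i ⬝ᵥ w) = sw * (E i ⬝ᵥ w) := by
    intro i
    have h1 : E i ⬝ᵥ ((σ B).mulVec w) = sw * (E i ⬝ᵥ w) := by
      rw [hsw, dotProduct_smul]; rfl
    have h2 : E i ⬝ᵥ ((σ B).mulVec w) = s i * (E i ⬝ᵥ w) := by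
      rw [dotProduct_mulVec, ← mulVec_transpose, (hσsym B hB).eq, hs i, smul_dotProduct]
      rfl
    rw [← h1, ← h2]
  obtain ⟨i0, hi0⟩ : ∃ i0, E i0 ⬝ᵥ w ≠ 0 := by
    by_contra hall
    push_neg at hall
    apply hw
    rw [← hspan w]
    exact Finset.sum_eq_zero fun i _ => by rw [hall i, zero_smul]
  refine ⟨d i0, ?_⟩
  have hkey : ∀ i, (E i ⬝ᵥ w) ≠ 0 → d i = d i0 := by
    intro i hci
    apply hsd
    have h1 : s i = sw := mul_right_cancel₀ hci (hcoef i)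
    have h2 : s i0 = sw := mul_right_cancel₀ hi0 (hcoef i0)
    rw [h1, h2]
  calc B.mulVec w = ∑ i, (E i ⬝ᵥ w) • (d i • E i) := by
        rw [mulVec_expand hspan B w]; simp_rw [hBv]
    _ = ∑ i, d i0 • ((E i ⬝ᵥ w) • E i) := by
        refine Finset.sum_congr rfl fun i _ => ?_
        by_cases hci : (E i ⬝ᵥ w) = 0
        · simp only [hci, zero_smul, smul_zero]
        · rw [hkey i hci, smul_comm]
    _ = d i0 • ∑ i, (E i ⬝ᵥ w) • E i := (Finset.smul_sum).symm
    _ = d i0 • w := by rw [hspan w]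

/-- Pointwise existence of the coefficients. -/
private lemma exists_coeffs (σ : Matrix (Fin 3) (Fin 3) ℝ → Matrix (Fin 3) (Fin 3) ℝ)
    (hσiso : ∀ B ∈ PSym3, ∀ Q : Matrix (Fin 3) (Fin 3) ℝ, IsOrthogonal Q →
      σ (Qᵀ * B * Q) = Qᵀ * σ B * Q)
    (hBE : StrictBakerEricksen σ) (hB : B ∈ PSym3) :
    ∃ a : Fin 3 → ℝ, B = a 0 • 1 + a 1 • σ B + a 2 • (σ B) ^ 2 := by
  obtain ⟨E, d, s, hne, hBv, hdpos, hs, hspan, hsd⟩ := eigen_package σ hσiso hBE hB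
  obtain ⟨a, ha⟩ := interp3 s d hsd
  refine ⟨a, matrix_eq_of_action hspan fun i => ?_⟩
  have hsq : ((σ B) ^ 2).mulVec (E i) = (s i ^ 2) • E i := by
    rw [pow_two, ← mulVec_mulVec, hs i, mulVec_smul, hs i, smul_smul, ← pow_two]
  rw [hBv i, add_mulVec, add_mulVec, smul_mulVec, smul_mulVec,
    smul_mulVec, one_mulVec, hs i, hsq, ha i]
  module

private lemma conj_mem_PSym3 {Q : Matrix (Fin 3) (Fin 3) ℝ} (hB : B ∈ PSym3)
    (hQ : IsOrthogonal Q) : Qᵀ * B * Q ∈ PSym3 := by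
  have hsymm : (Qᵀ * B * Q).IsSymm := by
    unfold Matrix.IsSymm
    rw [transpose_mul, transpose_mul, transpose_transpose, hB.1.eq, mul_assoc]
  refine ⟨hsymm, PosDef.of_dotProduct_mulVec_pos ?_ ?_⟩
  · show (Qᵀ * B * Q)ᴴ = Qᵀ * B * Q
    rw [conjTranspose_eq_transpose_of_trivial]
    exact hsymm
  · intro x hx
    have hQx : Q.mulVec x ≠ 0 := by
      intro h0
      apply hx
      have := congrArg (Qᵀ.mulVec) h0
      rwa [mulVec_mulVec, hQ.2, one_mulVec, mulVec_zero] at this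
    have hpos := hB.2.dotProduct_mulVec_pos hQx
    have hrw : star x ⬝ᵥ ((Qᵀ * B * Q).mulVec x)
        = star (Q.mulVec x) ⬝ᵥ (B.mulVec (Q.mulVec x)) := by
      have hmv : (Qᵀ * B * Q).mulVec x = Qᵀ.mulVec (B.mulVec (Q.mulVec x)) := by
        rw [mulVec_mulVec, mulVec_mulVec]
      rw [hmv]
      simp only [star_trivial]
      rw [dotProduct_mulVec x Qᵀ, ← mulVec_transpose, transpose_transpose]
    rw [hrw]
    exact hpos

end Aux

def orthSetoid : Setoid (Matrix (Fin 3) (Fin 3) ℝ) where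
  r A B := ∃ Q : Matrix (Fin 3) (Fin 3) ℝ, IsOrthogonal Q ∧ B = Qᵀ * A * Q
  iseqv := by
    constructor
    · intro A
      exact ⟨1, ⟨by simp, by simp⟩, by simp⟩
    · rintro A B ⟨Q, hQ, rfl⟩
      refine ⟨Qᵀ, ⟨by rw [transpose_transpose, hQ.2], by rw [transpose_transpose, hQ.1]⟩, ?_⟩
      rw [transpose_transpose]
      calc A = (Q * Qᵀ) * A * (Q * Qᵀ) := by rw [hQ.1]; simp
        _ = Q * (Qᵀ * A * Q) * Qᵀ := by noncomm_ring
    · rintro A B C ⟨Q, hQ, rfl⟩ ⟨R, hR, rfl⟩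
      refine ⟨Q * R, ⟨?_, ?_⟩, by rw [transpose_mul]; noncomm_ring⟩
      · rw [transpose_mul, ← mul_assoc, mul_assoc Q, hR.1, mul_one, hQ.1]
      · rw [transpose_mul, ← mul_assoc, mul_assoc Rᵀ, hQ.2, mul_one, hR.2]

open scoped Classical in
noncomputable def psi (σ : Matrix (Fin 3) (Fin 3) ℝ → Matrix (Fin 3) (Fin 3) ℝ)
    (k : Fin 3) (B : Matrix (Fin 3) (Fin 3) ℝ) : ℝ :=
  let B₀ := (Quotient.mk orthSetoid B).out
  if h : ∃ a : Fin 3 → ℝ, B₀ = a 0 • 1 + a 1 • σ B₀ + a 2 • (σ B₀) ^ 2 then h.choose k else 0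

lemma psi_inv (σ : Matrix (Fin 3) (Fin 3) ℝ → Matrix (Fin 3) (Fin 3) ℝ) (k : Fin 3)
    (B Q : Matrix (Fin 3) (Fin 3) ℝ) (hQ : IsOrthogonal Q) :
    psi σ k (Qᵀ * B * Q) = psi σ k B := by
  unfold psi
  have hmk : Quotient.mk orthSetoid (Qᵀ * B * Q) = Quotient.mk orthSetoid B :=
    Quotient.sound (orthSetoid.symm ⟨Q, hQ, rfl⟩)
  rw [hmk]

/-- An isotropic function satisfying the strict Baker–Ericksen
inequalities is bi-coaxial, and hence semi-invertible. -/
theorem strictBE_implies_bicoaxial_and_semiInvertible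
    (σ : Matrix (Fin 3) (Fin 3) ℝ → Matrix (Fin 3) (Fin 3) ℝ)
    (hσsym : ∀ B ∈ PSym3, (σ B).IsSymm)
    (hσiso : ∀ B ∈ PSym3, ∀ Q : Matrix (Fin 3) (Fin 3) ℝ, IsOrthogonal Q →
      σ (Qᵀ * B * Q) = Qᵀ * σ B * Q)
    (hBE : StrictBakerEricksen σ) :
    (∀ B ∈ PSym3, Coaxial B (σ B) ∧ Coaxial (σ B) B) ∧ SemiInvertible σ := by
  constructor
  · intro B hB
    constructor
    · rintro v ⟨hv, μ, hμ⟩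
      exact ⟨hv, coax_fwd σ hσiso hB hv hμ⟩
    · exact coax_bwd σ hσsym hσiso hBE hB
  · refine ⟨psi σ, fun k B _ Q hQ => psi_inv σ k B Q hQ, ?_⟩
    intro B hB
    set q := Quotient.mk orthSetoid B with hq
    obtain ⟨Q, hQ, hBeq⟩ : ∃ Q : Matrix (Fin 3) (Fin 3) ℝ,
        IsOrthogonal Q ∧ B = Qᵀ * q.out * Q := by
      have hout : Quotient.mk orthSetoid q.out = Quotient.mk orthSetoid B :=
        (Quotient.out_eq q).trans hq
      exact Quotient.exact hout
    have houtrep : q.out = Qᵀᵀ * B * Qᵀ := by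
      rw [hBeq, transpose_transpose]
      calc q.out = (Q * Qᵀ) * q.out * (Q * Qᵀ) := by rw [hQ.1]; simp
        _ = Q * (Qᵀ * q.out * Q) * Qᵀ := by noncomm_ring
    have hQt : IsOrthogonal Qᵀ := ⟨by rw [transpose_transpose, hQ.2],
      by rw [transpose_transpose, hQ.1]⟩
    have hout_mem : q.out ∈ PSym3 := houtrep ▸ conj_mem_PSym3 hB hQt
    have hex : ∃ a : Fin 3 → ℝ,
        q.out = a 0 • 1 + a 1 • σ q.out + a 2 • (σ q.out) ^ 2 :=
      exists_coeffs σ hσiso hBE hout_mem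
    have hpsi : ∀ k, psi σ k B = hex.choose k := by
      intro k
      unfold psi
      rw [dif_pos hex]
    have hspec := hex.choose_spec
    set a : Fin 3 → ℝ := hex.choose with ha
    have hσB : σ B = Qᵀ * σ q.out * Q := by
      have := hσiso q.out hout_mem Q hQ
      rw [← hBeq] at this
      exact this
    have hsq : Qᵀ * (σ q.out) ^ 2 * Q = (σ B) ^ 2 := by
      rw [hσB, pow_two, pow_two]
      calc Qᵀ * (σ q.out * σ q.out) * Q
          = Qᵀ * σ q.out * (Q * Qᵀ) * σ q.out * Q := by rw [hQ.1]; noncomm_ring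
        _ = (Qᵀ * σ q.out * Q) * (Qᵀ * σ q.out * Q) := by noncomm_ring
    rw [hpsi 0, hpsi 1, hpsi 2]
    calc B = Qᵀ * q.out * Q := hBeq
      _ = Qᵀ * (a 0 • 1 + a 1 • σ q.out + a 2 • (σ q.out) ^ 2) * Q := by rw [← hspec]
      _ = a 0 • (Qᵀ * 1 * Q) + a 1 • (Qᵀ * σ q.out * Q) + a 2 • (Qᵀ * (σ q.out) ^ 2 * Q) := by
          simp only [mul_add, add_mul, mul_smul_comm, smul_mul_assoc]
      _ = a 0 • 1 + a 1 • σ B + a 2 • (σ B) ^ 2 := by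
          rw [mul_one, hQ.2, hsq, ← hσB]
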